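/- For every h > 0 and every ξ ∈ ℝ², the vectors w^tr_0(ξ) = (1, φ_{e₃}(ξ), φ_{−e₂}(ξ)) and w^tr_±(ξ) = (1, φ_{e₃}(ξ ± h⁻¹f₁'), φ_{−e₂}(ξ ± h⁻¹f₁')) are eigenvectors of the 3×3 matrix Ĥ^tr_h(ξ): Ĥ^tr_h(ξ) w^tr_0(ξ) = E^tr_0(ξ) w^tr_0(ξ) and Ĥ^tr_h(ξ) w^tr_±(ξ) = E^tr_±(ξ) w^tr_±(ξ). -/

import Mathlib

open MeasureTheory Complex Filter Topology Matrix
open scoped FourierTransform RealInnerProductSpace ComplexConjugate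

noncomputable section

abbrev R2 : Type := EuclideanSpace ℝ (Fin 2)

def v2 (a b : ℝ) : R2 := WithLp.toLp 2 ![a, b]

def he1 : R2 := v2 (1/2) (Real.sqrt 3 / 2)
def he2 : R2 := v2 (1/2) (-(Real.sqrt 3) / 2)
def he3 : R2 := v2 (-1) 0
def hf1 : R2 := v2 (3/2) (Real.sqrt 3 / 2)
def hf2 : R2 := v2 (3/2) (-(Real.sqrt 3) / 2)
def hf1' : R2 := v2 (1/3) (Real.sqrt 3 / 3)

/-- `φ_f(ξ) = exp(2πi h f·ξ)`. -/
def phase (h : ℝ) (f ξ : R2) : ℂ :=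
  Complex.exp (2 * Real.pi * Complex.I * (h : ℂ) * ((⟪f, ξ⟫ : ℝ) : ℂ))

/-- The symbol `Ĥ^tr_h(ξ)` of the triangular Laplacian in the 3-component representation. -/
def HtrMat (h : ℝ) (ξ : R2) : Matrix (Fin 3) (Fin 3) ℂ :=
  ((h : ℂ) ^ 2)⁻¹ •
    !![6, -1 - phase h hf1 ξ - phase h hf2 ξ, -1 - phase h hf2 ξ - phase h (hf2 - hf1) ξ;
       -1 - phase h (-hf1) ξ - phase h (-hf2) ξ, 6, -1 - phase h (-hf1) ξ - phase h (hf2 - hf1) ξ;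
       -1 - phase h (-hf2) ξ - phase h (hf1 - hf2) ξ, -1 - phase h hf1 ξ - phase h (hf1 - hf2) ξ, 6]

/-- `E^tr(ξ) = h⁻²(6 − 2∑_{j=1}^3 cos(2πh e_j·ξ))`. -/
def Etr (h : ℝ) (ξ : R2) : ℝ :=
  (6 - 2 * (Real.cos (2 * Real.pi * h * ⟪he1, ξ⟫) + Real.cos (2 * Real.pi * h * ⟪he2, ξ⟫) +
    Real.cos (2 * Real.pi * h * ⟪he3, ξ⟫))) / h ^ 2

/-- `w^tr_0(ξ) = (1, φ_{e₃}(ξ), φ_{−e₂}(ξ))`. -/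
def wtr0 (h : ℝ) (ξ : R2) : Fin 3 → ℂ := ![1, phase h he3 ξ, phase h (-he2) ξ]

/-! ### Auxiliary lemmas -/

lemma inner_v2 (a b c d : ℝ) : ⟪v2 a b, v2 c d⟫ = a*c + b*d := by
  simp [v2, PiLp.inner_apply, Fin.sum_univ_two, RCLike.inner_apply]; ring

lemma sqrt3_sq : Real.sqrt 3 * Real.sqrt 3 = 3 := Real.mul_self_sqrt (by norm_num)

lemma phase_ne (h : ℝ) (f ξ : R2) : phase h f ξ ≠ 0 := Complex.exp_ne_zero _

lemma phase_neg (h : ℝ) (f ξ : R2) : phase h (-f) ξ = (phase h f ξ)⁻¹ := by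
  rw [phase, phase, ← Complex.exp_neg]
  congr 1
  rw [inner_neg_left]
  push_cast
  ring

lemma phase_addf (h : ℝ) (f g ξ : R2) :
    phase h (f + g) ξ = phase h f ξ * phase h g ξ := by
  rw [phase, phase, phase, ← Complex.exp_add]
  congr 1
  rw [inner_add_left]
  push_cast
  ring

lemma phase_subf (h : ℝ) (f g ξ : R2) :
    phase h (f - g) ξ = phase h f ξ * (phase h g ξ)⁻¹ := by
  rw [sub_eq_add_neg, phase_addf, phase_neg]

lemma f1_eq : hf1 = he1 - he3 := by
  ext i; fin_cases i <;> simp [hf1, he1, he3, v2] <;> ring_nf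

lemma f2_eq : hf2 = he2 - he3 := by
  ext i; fin_cases i <;> simp [hf2, he2, he3, v2] <;> ring_nf

lemma esum_eq : he1 + he2 + he3 = 0 := by
  ext i; fin_cases i <;> simp [he1, he2, he3, v2] <;> ring_nf

lemma phase_zero (h : ℝ) (ξ : R2) : phase h (0 : R2) ξ = 1 := by
  rw [phase, inner_zero_left]
  simp

/-- Shift invariance of phases of vectors pairing integrally with `η`. -/
lemma phase_shift (h : ℝ) (hh : h ≠ 0) (f ξ η : R2) (n : ℤ) (hn : ⟪f, η⟫ = (n : ℝ)) :
    phase h f (ξ + h⁻¹ • η) = phase h f ξ := by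
  rw [phase, phase, inner_add_right, real_inner_smul_right, hn]
  rw [show ((⟪f, ξ⟫ + h⁻¹ * (n:ℝ) : ℝ) : ℂ) = ((⟪f, ξ⟫ : ℝ) : ℂ) + (h : ℂ)⁻¹ * (n : ℂ) by
    push_cast; ring]
  rw [mul_add, Complex.exp_add]
  have hch : (h : ℂ) ≠ 0 := by exact_mod_cast hh
  rw [show 2 * Real.pi * Complex.I * (h : ℂ) * ((h : ℂ)⁻¹ * (n : ℂ)) =
      (n : ℂ) * (2 * Real.pi * Complex.I) by field_simp]
  rw [Complex.exp_int_mul_two_pi_mul_I, mul_one]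

lemma inner_f1_f1' : ⟪hf1, hf1'⟫ = ((1 : ℤ) : ℝ) := by
  rw [hf1, hf1', inner_v2]
  push_cast
  nlinarith [sqrt3_sq]

lemma inner_f2_f1' : ⟪hf2, hf1'⟫ = ((0 : ℤ) : ℝ) := by
  rw [hf2, hf1', inner_v2]
  push_cast
  nlinarith [sqrt3_sq]

/-- The matrix `Ĥ^tr_h(ξ)` is invariant under the shift `ξ ↦ ξ + t • (h⁻¹ • f₁')`, `t = ±1`. -/
lemma HtrMat_shift (h : ℝ) (hh : h ≠ 0) (ξ η : R2)
    (h1 : ∃ n : ℤ, ⟪hf1, η⟫ = (n : ℝ)) (h2 : ∃ n : ℤ, ⟪hf2, η⟫ = (n : ℝ)) :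
    HtrMat h (ξ + h⁻¹ • η) = HtrMat h ξ := by
  obtain ⟨n1, hn1⟩ := h1
  obtain ⟨n2, hn2⟩ := h2
  have p1 := phase_shift h hh hf1 ξ η n1 hn1
  have p2 := phase_shift h hh hf2 ξ η n2 hn2
  have p3 : phase h (hf2 - hf1) (ξ + h⁻¹ • η) = phase h (hf2 - hf1) ξ := by
    apply phase_shift h hh _ _ _ (n2 - n1)
    rw [inner_sub_left, hn1, hn2]; push_cast; ring
  have p4 : phase h (-hf1) (ξ + h⁻¹ • η) = phase h (-hf1) ξ := by
    apply phase_shift h hh _ _ _ (-n1)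
    rw [inner_neg_left, hn1]; push_cast; ring
  have p5 : phase h (-hf2) (ξ + h⁻¹ • η) = phase h (-hf2) ξ := by
    apply phase_shift h hh _ _ _ (-n2)
    rw [inner_neg_left, hn2]; push_cast; ring
  have p6 : phase h (hf1 - hf2) (ξ + h⁻¹ • η) = phase h (hf1 - hf2) ξ := by
    apply phase_shift h hh _ _ _ (n1 - n2)
    rw [inner_sub_left, hn1, hn2]; push_cast; ring
  rw [HtrMat, HtrMat, p1, p2, p3, p4, p5, p6]

lemma cos_as_phase (h : ℝ) (e ξ : R2) :
    Complex.cos (2 * (Real.pi : ℂ) * (h : ℂ) * ((⟪e, ξ⟫ : ℝ) : ℂ)) =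
      (phase h e ξ + (phase h e ξ)⁻¹) / 2 := by
  rw [Complex.cos, phase, ← Complex.exp_neg]
  congr 2
  · congr 1; ring
  · congr 1; ring

lemma f21_eq : hf2 - hf1 = he2 - he1 := by
  ext i; fin_cases i <;> simp [hf1, hf2, he1, he2, v2] <;> ring_nf

lemma f12_eq : hf1 - hf2 = he1 - he2 := by
  ext i; fin_cases i <;> simp [hf1, hf2, he1, he2, v2] <;> ring_nf

lemma nf1_eq : -hf1 = he3 - he1 := by
  ext i; fin_cases i <;> simp [hf1, he1, he3, v2] <;> ring_nf

lemma nf2_eq : -hf2 = he3 - he2 := by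
  ext i; fin_cases i <;> simp [hf2, he2, he3, v2] <;> ring_nf

/-- The main eigenvalue identity at an arbitrary point. -/
lemma core (h : ℝ) (hh : 0 < h) (ξ : R2) :
    (HtrMat h ξ).mulVec (wtr0 h ξ) = ((Etr h ξ : ℝ) : ℂ) • wtr0 h ξ := by
  have hch : (h : ℂ) ≠ 0 := by exact_mod_cast hh.ne'
  set a := phase h he1 ξ with ha_def
  set b := phase h he2 ξ with hb_def
  set c := phase h he3 ξ with hc_def
  have habc : a * b * c = 1 := by
    rw [ha_def, hb_def, hc_def, ← phase_addf, ← phase_addf, esum_eq, phase_zero]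
  have hai : a⁻¹ = b * c := (eq_inv_of_mul_eq_one_left (by linear_combination habc)).symm
  have hbi : b⁻¹ = a * c := (eq_inv_of_mul_eq_one_left (by linear_combination habc)).symm
  have hci : c⁻¹ = a * b := (eq_inv_of_mul_eq_one_left (by linear_combination habc)).symm
  have pf1 : phase h hf1 ξ = a ^ 2 * b := by
    rw [f1_eq, phase_subf, ← ha_def, ← hc_def, hci]; ring
  have pf2 : phase h hf2 ξ = a * b ^ 2 := by
    rw [f2_eq, phase_subf, ← hb_def, ← hc_def, hci]; ring
  have pf21 : phase h (hf2 - hf1) ξ = b ^ 2 * c := by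
    rw [f21_eq, phase_subf, ← hb_def, ← ha_def, hai]; ring
  have pf12 : phase h (hf1 - hf2) ξ = a ^ 2 * c := by
    rw [f12_eq, phase_subf, ← ha_def, ← hb_def, hbi]; ring
  have pnf1 : phase h (-hf1) ξ = b * c ^ 2 := by
    rw [nf1_eq, phase_subf, ← hc_def, ← ha_def, hai]; ring
  have pnf2 : phase h (-hf2) ξ = a * c ^ 2 := by
    rw [nf2_eq, phase_subf, ← hc_def, ← hb_def, hbi]; ring
  have pne2 : phase h (-he2) ξ = a * c := by rw [phase_neg, ← hb_def, hbi]
  have hw : wtr0 h ξ = ![1, c, a * c] := by rw [wtr0, ← hc_def, pne2]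
  have hM : HtrMat h ξ = ((h : ℂ) ^ 2)⁻¹ •
      !![6, -1 - a ^ 2 * b - a * b ^ 2, -1 - a * b ^ 2 - b ^ 2 * c;
         -1 - b * c ^ 2 - a * c ^ 2, 6, -1 - b * c ^ 2 - b ^ 2 * c;
         -1 - a * c ^ 2 - a ^ 2 * c, -1 - a ^ 2 * b - a ^ 2 * c, 6] := by
    rw [HtrMat, pf1, pf2, pf21, pf12, pnf1, pnf2]
  have hE : ((Etr h ξ : ℝ) : ℂ) =
      (6 - (a + b * c + b + a * c + c + a * b)) / (h : ℂ) ^ 2 := by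
    rw [Etr]
    push_cast
    rw [cos_as_phase, cos_as_phase, cos_as_phase, ← ha_def, ← hb_def, ← hc_def,
      hai, hbi, hci]
    ring
  have key : (!![6, -1 - a ^ 2 * b - a * b ^ 2, -1 - a * b ^ 2 - b ^ 2 * c;
         -1 - b * c ^ 2 - a * c ^ 2, 6, -1 - b * c ^ 2 - b ^ 2 * c;
         -1 - a * c ^ 2 - a ^ 2 * c, -1 - a ^ 2 * b - a ^ 2 * c, 6]).mulVec ![1, c, a * c]
      = ((6 : ℂ) - (a + b * c + b + a * c + c + a * b)) • ![1, c, a * c] := by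
    funext i
    fin_cases i <;>
      simp [Matrix.mulVec, dotProduct, Fin.sum_univ_three, Pi.smul_apply, smul_eq_mul]
    · linear_combination (-(a + b + a * b + b * c)) * habc
    · linear_combination (1 - c ^ 2 - b * c) * habc
    · linear_combination (1 + c) * habc
  rw [hw, hM, hE, Matrix.smul_mulVec, key, smul_smul]
  congr 1
  ring

/-- Lemma `lem-spec-tr`: `w^tr_0(ξ)` and `w^tr_±(ξ)` are eigenvectors of
`Ĥ^tr_h(ξ)` with eigenvalues `E^tr_0(ξ) = E^tr(ξ)` and `E^tr_±(ξ) = E^tr(ξ ± h⁻¹f₁')`. -/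
theorem triangular_symbol_eigenvectors (h : ℝ) (hh : 0 < h) (ξ : R2) :
    (HtrMat h ξ).mulVec (wtr0 h ξ) = ((Etr h ξ : ℝ) : ℂ) • wtr0 h ξ ∧
    (HtrMat h ξ).mulVec (wtr0 h (ξ + h⁻¹ • hf1')) =
      ((Etr h (ξ + h⁻¹ • hf1') : ℝ) : ℂ) • wtr0 h (ξ + h⁻¹ • hf1') ∧
    (HtrMat h ξ).mulVec (wtr0 h (ξ - h⁻¹ • hf1')) =
      ((Etr h (ξ - h⁻¹ • hf1') : ℝ) : ℂ) • wtr0 h (ξ - h⁻¹ • hf1') := by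
  refine ⟨core h hh ξ, ?_, ?_⟩
  · have := HtrMat_shift h hh.ne' ξ hf1' ⟨1, inner_f1_f1'⟩ ⟨0, inner_f2_f1'⟩
    rw [← this]
    exact core h hh _
  · have hneg : ξ - h⁻¹ • hf1' = (ξ - h⁻¹ • hf1' : R2) := rfl
    have := HtrMat_shift h hh.ne' (ξ - h⁻¹ • hf1') hf1' ⟨1, inner_f1_f1'⟩ ⟨0, inner_f2_f1'⟩
    rw [show ξ - h⁻¹ • hf1' + h⁻¹ • hf1' = ξ by abel] at this
    rw [this]
    exact core h hh _

end
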